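/- Let X be a compact Hausdorff space and n a nonnegative integer. Then X admits a fine directed family of canonical covers each of order at most n+1 if and only if X admits a fine directed family of almost canonical covers each of order at most n+1. (Equivalently, the cofinal dimension condition Δ(X) ≤ n is unchanged if 'canonical cover' is replaced by 'almost canonical cover' throughout its definition.) -/
import Mathlib


universe u

/-- A collection of subsets of a topological space is locally finite. -/
def LocallyFiniteColl {X : Type u} [TopologicalSpace X] (𝒞 : Set (Set X)) : Prop :=
  ∀ x : X, ∃ V ∈ nhds x, {F ∈ 𝒞 | (F ∩ V).Nonempty}.Finite

/-- A canonical cover (as a collection of sets): a locally finite closed cover whose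
members are the closures of a pairwise disjoint assignment of nonempty open sets. -/
def IsCanonicalCoverColl {X : Type u} [TopologicalSpace X] (𝒞 : Set (Set X)) : Prop :=
  (∀ F ∈ 𝒞, IsClosed F) ∧
  ⋃₀ 𝒞 = Set.univ ∧
  LocallyFiniteColl 𝒞 ∧
  ∃ u : Set X → Set X,
    (∀ F ∈ 𝒞, IsOpen (u F) ∧ (u F).Nonempty ∧ F = closure (u F)) ∧
    (∀ F ∈ 𝒞, ∀ G ∈ 𝒞, F ≠ G → u F ∩ u G = ∅)

/-- An almost canonical cover (as a collection of sets). -/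
def IsAlmostCanonicalCoverColl {X : Type u} [TopologicalSpace X] (𝒞 : Set (Set X)) : Prop :=
  (∀ F ∈ 𝒞, IsClosed F) ∧
  ⋃₀ 𝒞 = Set.univ ∧
  LocallyFiniteColl 𝒞 ∧
  (∀ F ∈ 𝒞, (interior F).Nonempty) ∧
  (∀ F ∈ 𝒞, ∀ G ∈ 𝒞, F ≠ G → interior F ∩ interior G = ∅) ∧
  (∀ V : Set X, IsOpen V → V.Nonempty → ∃ F ∈ 𝒞, (V ∩ interior F).Nonempty)

/-- `U` refines `V`: every member of `U` is contained in some member of `V`. -/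
def CoverRefines {X : Type u} (U V : Set (Set X)) : Prop :=
  ∀ A ∈ U, ∃ B ∈ V, A ⊆ B

/-- The order of a collection of sets is at most `n`. -/
def CoverOrderLE {X : Type u} (U : Set (Set X)) (n : ℕ) : Prop :=
  ∀ (x : X) (s : Finset (Set X)), (s : Set (Set X)) ⊆ U → (∀ B ∈ s, x ∈ B) → s.card ≤ n

/-- Every canonical cover is almost canonical. -/
lemma isCanonical_isAlmostCanonical {X : Type u} [TopologicalSpace X] {𝒞 : Set (Set X)}
    (h : IsCanonicalCoverColl 𝒞) : IsAlmostCanonicalCoverColl 𝒞 := by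
  obtain ⟨hcl, hcov, hlf, u, hu, hdisj⟩ := h
  have hsub : ∀ F ∈ 𝒞, u F ⊆ interior F := by
    intro F hF
    obtain ⟨ho, -, heq⟩ := hu F hF
    have h1 : u F ⊆ F := by nth_rewrite 2 [heq]; exact subset_closure
    exact interior_maximal h1 ho
  refine ⟨hcl, hcov, hlf, fun F hF => ((hu F hF).2.1).mono (hsub F hF), ?_, ?_⟩
  · intro F hF G hG hne
    by_contra h
    obtain ⟨x, hx⟩ := Set.nonempty_iff_ne_empty.2 h
    have hW : IsOpen (interior F ∩ interior G) := isOpen_interior.inter isOpen_interior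
    have hxF : x ∈ closure (u F) := (hu F hF).2.2 ▸ interior_subset hx.1
    obtain ⟨y, hyW, hyuF⟩ := mem_closure_iff.1 hxF _ hW hx
    have hyG : y ∈ closure (u G) := (hu G hG).2.2 ▸ interior_subset hyW.2
    obtain ⟨z, hz, hzuG⟩ := mem_closure_iff.1 hyG _ (hW.inter (hu F hF).1) ⟨hyW, hyuF⟩
    have : z ∈ u F ∩ u G := ⟨hz.2, hzuG⟩
    rw [hdisj F hF G hG hne] at this
    exact this
  · intro V hV ⟨x, hxV⟩
    have : x ∈ ⋃₀ 𝒞 := hcov ▸ Set.mem_univ x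
    obtain ⟨F, hF, hxF⟩ := this
    have hxcl : x ∈ closure (u F) := (hu F hF).2.2 ▸ hxF
    obtain ⟨y, hyV, hyu⟩ := mem_closure_iff.1 hxcl _ hV hxV
    exact ⟨F, hF, y, hyV, hsub F hF hyu⟩

/-- The regularization of an almost canonical cover is canonical. -/
lemma almost_to_canonical {X : Type u} [TopologicalSpace X] {𝒞 : Set (Set X)}
    (h : IsAlmostCanonicalCoverColl 𝒞) :
    IsCanonicalCoverColl ((fun F => closure (interior F)) '' 𝒞) := by
  obtain ⟨hcl, hcov, hlf, hint, hdisj, hdense⟩ := h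
  have hsub : ∀ F ∈ 𝒞, closure (interior F) ⊆ F := fun F hF =>
    closure_minimal interior_subset (hcl F hF)
  refine ⟨?_, ?_, ?_, interior, ?_, ?_⟩
  · rintro G ⟨F, hF, rfl⟩
    exact isClosed_closure
  · apply Set.eq_univ_of_forall
    intro x
    obtain ⟨V, hVnhds, hVfin⟩ := hlf x
    have key : x ∈ closure (⋃ F ∈ {F ∈ 𝒞 | (F ∩ V).Nonempty}, interior F) := by
      rw [mem_closure_iff]
      intro O hO hxO
      have hOV : IsOpen (O ∩ interior V) := hO.inter isOpen_interior
      have hxOV : x ∈ O ∩ interior V := ⟨hxO, mem_interior_iff_mem_nhds.2 hVnhds⟩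
      obtain ⟨F, hF, y, hy⟩ := hdense _ hOV ⟨x, hxOV⟩
      refine ⟨y, hy.1.1, ?_⟩
      have hFV : F ∈ {F ∈ 𝒞 | (F ∩ V).Nonempty} :=
        ⟨hF, y, interior_subset hy.2, interior_subset hy.1.2⟩
      exact Set.mem_biUnion hFV hy.2
    rw [hVfin.closure_biUnion] at key
    obtain ⟨F, hF, hxF⟩ := Set.mem_iUnion₂.1 key
    exact ⟨closure (interior F), ⟨F, hF.1, rfl⟩, hxF⟩
  · intro x
    obtain ⟨V, hVnhds, hVfin⟩ := hlf x
    refine ⟨V, hVnhds, ?_⟩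
    have : {G ∈ (fun F => closure (interior F)) '' 𝒞 | (G ∩ V).Nonempty} ⊆
        (fun F => closure (interior F)) '' {F ∈ 𝒞 | (F ∩ V).Nonempty} := by
      rintro G ⟨⟨F, hF, rfl⟩, hGV⟩
      exact ⟨F, ⟨hF, hGV.mono (Set.inter_subset_inter_left V (hsub F hF))⟩, rfl⟩
    exact (hVfin.image _).subset this
  · rintro G ⟨F, hF, rfl⟩
    have h1 : interior F ⊆ interior (closure (interior F)) :=
      interior_maximal subset_closure isOpen_interior
    refine ⟨isOpen_interior, (hint F hF).mono h1, ?_⟩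
    exact subset_antisymm (closure_mono h1) (closure_minimal interior_subset isClosed_closure)
  · rintro G ⟨F, hF, rfl⟩ G' ⟨F', hF', rfl⟩ hne
    by_contra hcon
    obtain ⟨x, hx⟩ := Set.nonempty_iff_ne_empty.2 hcon
    have hFF' : F ≠ F' := fun h => hne (by rw [h])
    have hW : IsOpen (interior (closure (interior F)) ∩ interior (closure (interior F'))) :=
      isOpen_interior.inter isOpen_interior
    have hx1 : x ∈ closure (interior F) := interior_subset hx.1
    obtain ⟨y, hyW, hyF⟩ := mem_closure_iff.1 hx1 _ hW hx
    have hy2 : y ∈ closure (interior F') := interior_subset hyW.2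
    obtain ⟨z, hz, hzF'⟩ := mem_closure_iff.1 hy2 _ (hW.inter isOpen_interior) ⟨hyW, hyF⟩
    have : z ∈ interior F ∩ interior F' := ⟨hz.2, hzF'⟩
    rw [hdisj F hF F' hF' hFF'] at this
    exact this

/-- For a compact Hausdorff space, admitting a fine directed family of canonical covers of
order at most `n+1` is equivalent to admitting a fine directed family of almost canonical
covers of order at most `n+1`; i.e. the condition `Δ(X) ≤ n` is unchanged when canonical
covers are replaced by almost canonical covers. -/
theorem cofinalDimension_almostCanonical_iff {X : Type u} [TopologicalSpace X]
    [CompactSpace X] [T2Space X] (n : ℕ) :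
    (∃ (Λ : Type) (_ : Preorder Λ) (𝒞 : Λ → Set (Set X)),
        Nonempty Λ ∧
        (∀ a b : Λ, ∃ c : Λ, a ≤ c ∧ b ≤ c) ∧
        (∀ a, IsCanonicalCoverColl (𝒞 a)) ∧
        (∀ a b : Λ, a ≤ b → CoverRefines (𝒞 b) (𝒞 a)) ∧
        (∀ 𝒰 : Set (Set X), (∀ U ∈ 𝒰, IsOpen U) → ⋃₀ 𝒰 = Set.univ →
          ∃ a, CoverRefines (𝒞 a) 𝒰) ∧
        (∀ a, CoverOrderLE (𝒞 a) (n + 1))) ↔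
    (∃ (Λ : Type) (_ : Preorder Λ) (𝒞 : Λ → Set (Set X)),
        Nonempty Λ ∧
        (∀ a b : Λ, ∃ c : Λ, a ≤ c ∧ b ≤ c) ∧
        (∀ a, IsAlmostCanonicalCoverColl (𝒞 a)) ∧
        (∀ a b : Λ, a ≤ b → CoverRefines (𝒞 b) (𝒞 a)) ∧
        (∀ 𝒰 : Set (Set X), (∀ U ∈ 𝒰, IsOpen U) → ⋃₀ 𝒰 = Set.univ →
          ∃ a, CoverRefines (𝒞 a) 𝒰) ∧
        (∀ a, CoverOrderLE (𝒞 a) (n + 1))) := by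
  constructor
  · rintro ⟨Λ, ord, 𝒞, hne, hdir, hcan, href, hfine, hord⟩
    exact ⟨Λ, ord, 𝒞, hne, hdir, fun a => isCanonical_isAlmostCanonical (hcan a),
      href, hfine, hord⟩
  · rintro ⟨Λ, ord, 𝒞, hne, hdir, hcan, href, hfine, hord⟩
    classical
    refine ⟨Λ, ord, fun a => (fun F => closure (interior F)) '' 𝒞 a, hne, hdir,
      fun a => almost_to_canonical (hcan a), ?_, ?_, ?_⟩
    · rintro a b hab G ⟨F, hF, rfl⟩
      obtain ⟨F', hF', hFF'⟩ := href a b hab F hF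
      exact ⟨closure (interior F'), ⟨F', hF', rfl⟩,
        closure_mono (interior_mono hFF')⟩
    · intro 𝒰 hopen hcov
      obtain ⟨a, ha⟩ := hfine 𝒰 hopen hcov
      refine ⟨a, ?_⟩
      rintro G ⟨F, hF, rfl⟩
      obtain ⟨U, hU, hFU⟩ := ha F hF
      have hclF : IsClosed F := (hcan a).1 F hF
      exact ⟨U, hU, (closure_minimal interior_subset hclF).trans hFU⟩
    · intro a x s hsub hmem
      set f : Set X → Set X := fun G =>
        if h : ∃ F ∈ 𝒞 a, closure (interior F) = G then h.choose else ∅ with hf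
      have hfspec : ∀ G ∈ s, f G ∈ 𝒞 a ∧ closure (interior (f G)) = G := by
        intro G hG
        obtain ⟨F, hF, hFG⟩ := hsub hG
        have h : ∃ F ∈ 𝒞 a, closure (interior F) = G := ⟨F, hF, hFG⟩
        simp only [hf, dif_pos h]
        exact ⟨h.choose_spec.1, h.choose_spec.2⟩
      have hinj : Set.InjOn f s := by
        intro G hG G' hG' hfeq
        rw [← (hfspec G hG).2, ← (hfspec G' hG').2, hfeq]
      have hcard : (s.image f).card = s.card := Finset.card_image_of_injOn hinj
      have := hord a x (s.image f) ?_ ?_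
      · rwa [hcard] at this
      · intro B hB
        obtain ⟨G, hG, rfl⟩ := Finset.mem_image.1 hB
        exact (hfspec G hG).1
      · intro B hB
        obtain ⟨G, hG, rfl⟩ := Finset.mem_image.1 hB
        have hclF : IsClosed (f G) := (hcan a).1 _ (hfspec G hG).1
        have : x ∈ G := hmem G hG
        rw [← (hfspec G hG).2] at this
        exact closure_minimal interior_subset hclF this
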